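/- The second isoperimetric constant over disjoint pairs equals that over 2-partitions: min over pairs of disjoint nonempty subsets Q₁, Q₂ of (1/2)(∂(Q₁)/π(Q₁) + ∂(Q₂)/π(Q₂)) equals min over nonempty proper subsets Q of ∂(Q)/(2π(Q)(1−π(Q))). -/

import Mathlib

open Finset

/-- Outgoing boundary flow `∂(Q) = ∑_{u∈Q, v∉Q} K(u,v)π(u)`. -/
noncomputable def dpart {V : Type*} [Fintype V] [DecidableEq V]
    (K : V → V → ℝ) (π : V → ℝ) (Q : Finset V) : ℝ :=
  ∑ u ∈ Q, ∑ v ∈ Qᶜ, K u v * π u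

/-- `π(Q) = ∑_{u∈Q} π(u)`. -/
noncomputable def pim {V : Type*} (π : V → ℝ) (Q : Finset V) : ℝ :=
  ∑ u ∈ Q, π u

/-- The `n`-th isoperimetric constant: minimum of the mean normalized boundary over
families of `n` pairwise disjoint nonempty subsets of `V`. -/
noncomputable def iotaD {V : Type*} [Fintype V] [DecidableEq V]
    (K : V → V → ℝ) (π : V → ℝ) (n : ℕ) : ℝ :=
  sInf {x : ℝ | ∃ Q : Fin n → Finset V, (∀ i, (Q i).Nonempty) ∧
    Pairwise (Function.onFun Disjoint Q) ∧
    x = (∑ i, dpart K π (Q i) / pim π (Q i)) / n}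

/-- The `n`-th partition isoperimetric constant: minimum of the mean normalized boundary
over partitions of `V` into `n` nonempty parts. -/
noncomputable def iotaP {V : Type*} [Fintype V] [DecidableEq V]
    (K : V → V → ℝ) (π : V → ℝ) (n : ℕ) : ℝ :=
  sInf {x : ℝ | ∃ Q : Fin n → Finset V, (∀ i, (Q i).Nonempty) ∧
    Pairwise (Function.onFun Disjoint Q) ∧
    Finset.univ.biUnion Q = Finset.univ ∧
    x = (∑ i, dpart K π (Q i) / pim π (Q i)) / n}

lemma pim_pos {V : Type*} {π : V → ℝ} (hπ : ∀ u, 0 < π u) {Q : Finset V}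
    (hQ : Q.Nonempty) : 0 < pim π Q :=
  Finset.sum_pos (fun u _ => hπ u) hQ

lemma dpart_nonneg {V : Type*} [Fintype V] [DecidableEq V]
    {K : V → V → ℝ} {π : V → ℝ} (hK0 : ∀ u v, 0 ≤ K u v) (hπ : ∀ u, 0 < π u)
    (Q : Finset V) : 0 ≤ dpart K π Q :=
  Finset.sum_nonneg fun u _ => Finset.sum_nonneg fun v _ =>
    mul_nonneg (hK0 u v) (hπ u).le

lemma pim_compl {V : Type*} [Fintype V] [DecidableEq V]
    {π : V → ℝ} (hπ1 : ∑ u, π u = 1) (Q : Finset V) :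
    pim π Qᶜ = 1 - pim π Q := by
  have := Finset.sum_compl_add_sum Q π
  unfold pim
  linarith

lemma dpart_compl {V : Type*} [Fintype V] [DecidableEq V]
    {K : V → V → ℝ} {π : V → ℝ}
    (hK1 : ∀ u, ∑ v, K u v = 1)
    (hstat : ∀ v, ∑ u, π u * K u v = π v) (Q : Finset V) :
    dpart K π Qᶜ = dpart K π Q := by
  have h1 : dpart K π Qᶜ = pim π Q - ∑ v ∈ Q, ∑ u ∈ Q, K u v * π u := by
    unfold dpart pim
    rw [compl_compl, Finset.sum_comm]
    rw [← Finset.sum_sub_distrib]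
    apply Finset.sum_congr rfl
    intro v _
    have h := Finset.sum_compl_add_sum Q (fun u => K u v * π u)
    have h2 : ∑ u, K u v * π u = π v := by
      rw [← hstat v]; apply Finset.sum_congr rfl; intro u _; ring
    linarith [h, h2]
  have h2 : dpart K π Q = pim π Q - ∑ u ∈ Q, ∑ v ∈ Q, K u v * π u := by
    unfold dpart pim
    rw [← Finset.sum_sub_distrib]
    apply Finset.sum_congr rfl
    intro u _
    have h := Finset.sum_compl_add_sum Q (fun v => K u v * π u)
    have h2 : ∑ v, K u v * π u = π u := by
      rw [← Finset.sum_mul, hK1, one_mul]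
    linarith [h, h2]
  rw [h1, h2, Finset.sum_comm]

lemma key_min_le {d1 d2 p1 p2 : ℝ} (hd1 : 0 ≤ d1) (hd2 : 0 ≤ d2)
    (hp1 : 0 < p1) (hp2 : 0 < p2) (hs : p1 + p2 ≤ 1) :
    min (d1 / (2 * p1 * (1 - p1))) (d2 / (2 * p2 * (1 - p2)))
      ≤ (d1 / p1 + d2 / p2) / 2 := by
  have h1p1 : 0 < 1 - p1 := by linarith
  have h1p2 : 0 < 1 - p2 := by linarith
  set a := d1 / p1 with ha
  set b := d2 / p2 with hb
  have ha0 : 0 ≤ a := div_nonneg hd1 hp1.le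
  have hb0 : 0 ≤ b := div_nonneg hd2 hp2.le
  have e1 : d1 / (2 * p1 * (1 - p1)) = a / (2 * (1 - p1)) := by
    rw [ha, div_div]; ring_nf
  have e2 : d2 / (2 * p2 * (1 - p2)) = b / (2 * (1 - p2)) := by
    rw [hb, div_div]; ring_nf
  rw [e1, e2]
  by_contra h
  push_neg at h
  rw [lt_min_iff] at h
  obtain ⟨h1, h2⟩ := h
  rw [div_lt_div_iff₀ two_pos (by positivity)] at h1
  rw [div_lt_div_iff₀ two_pos (by positivity)] at h2
  nlinarith

theorem iotaD_two_eq_cheeger {V : Type*} [Fintype V] [DecidableEq V]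
    (K : V → V → ℝ) (π : V → ℝ)
    (hK0 : ∀ u v, 0 ≤ K u v) (hK1 : ∀ u, ∑ v, K u v = 1)
    (hπ : ∀ u, 0 < π u) (hπ1 : ∑ u, π u = 1)
    (hstat : ∀ v, ∑ u, π u * K u v = π v)
    (hcard : 2 ≤ Fintype.card V) :
    iotaD K π 2 = sInf {x : ℝ | ∃ Q : Finset V, Q.Nonempty ∧ Q ≠ Finset.univ ∧
      x = dpart K π Q / (2 * pim π Q * (1 - pim π Q))} := by
  set D : Set ℝ := {x : ℝ | ∃ Q : Fin 2 → Finset V, (∀ i, (Q i).Nonempty) ∧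
    Pairwise (Function.onFun Disjoint Q) ∧
    x = (∑ i, dpart K π (Q i) / pim π (Q i)) / 2} with hD
  set R : Set ℝ := {x : ℝ | ∃ Q : Finset V, Q.Nonempty ∧ Q ≠ Finset.univ ∧
    x = dpart K π Q / (2 * pim π Q * (1 - pim π Q))} with hR
  -- basic fact : for proper nonempty Q, pim ∈ (0,1)
  have hpim_lt : ∀ Q : Finset V, Q ≠ Finset.univ → pim π Q < 1 := by
    intro Q hQ
    have hc : Qᶜ.Nonempty := Finset.nonempty_iff_ne_empty.mpr
      (fun h => hQ ((Finset.compl_eq_empty_iff Q).mp h))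
    have := pim_pos hπ hc
    rw [pim_compl hπ1] at this
    linarith
  -- R ⊆ D
  have hsub : R ⊆ D := by
    rintro x ⟨Q, hQne, hQu, rfl⟩
    refine ⟨![Q, Qᶜ], ?_, ?_, ?_⟩
    · intro i
      fin_cases i
      · simpa using hQne
      · simp only [Matrix.cons_val_one, Matrix.head_cons]
        exact Finset.nonempty_iff_ne_empty.mpr
          (fun h => hQu ((Finset.compl_eq_empty_iff Q).mp h))
    · intro i j hij
      fin_cases i <;> fin_cases j <;> simp_all [Function.onFun] <;>
        [exact disjoint_compl_right; exact disjoint_compl_left]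
    · have hp : 0 < pim π Q := pim_pos hπ hQne
      have hp1 : pim π Q < 1 := hpim_lt Q hQu
      rw [Fin.sum_univ_two]
      simp only [Matrix.cons_val_zero, Matrix.cons_val_one, Matrix.head_cons]
      rw [dpart_compl hK1 hstat, pim_compl hπ1]
      have h2 : (1 - pim π Q) ≠ 0 := by linarith
      have h3 : pim π Q ≠ 0 := ne_of_gt hp
      field_simp
      ring
  -- D nonempty, bounded below by 0 ; R nonempty
  have hDlb : ∀ x ∈ D, (0:ℝ) ≤ x := by
    rintro x ⟨Q, hQne, _, rfl⟩
    apply div_nonneg _ (by norm_num)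
    apply Finset.sum_nonneg
    intro i _
    exact div_nonneg (dpart_nonneg hK0 hπ _) (pim_pos hπ (hQne i)).le
  have hDbdd : BddBelow D := ⟨0, hDlb⟩
  have hRbdd : BddBelow R := ⟨0, fun x hx => hDlb x (hsub hx)⟩
  obtain ⟨a, b, hab⟩ := Fintype.exists_pair_of_one_lt_card
    (α := V) (lt_of_lt_of_le one_lt_two hcard)
  have hRne : R.Nonempty := by
    refine ⟨_, ⟨{a}, Finset.singleton_nonempty a, ?_, rfl⟩⟩
    intro h
    have : b ∈ ({a} : Finset V) := h ▸ Finset.mem_univ b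
    simp at this
    exact hab this.symm
  have hDne : D.Nonempty := hRne.mono hsub
  have hiD : iotaD K π 2 = sInf D := by rw [hD]; unfold iotaD; norm_cast
  rw [hiD]
  apply le_antisymm
  · exact csInf_le_csInf hDbdd hRne hsub
  · apply le_csInf hDne
    rintro x ⟨Q, hQne, hdisj, rfl⟩
    have hd : Disjoint (Q 0) (Q 1) := hdisj (by decide : (0 : Fin 2) ≠ 1)
    have hp0 : 0 < pim π (Q 0) := pim_pos hπ (hQne 0)
    have hp1 : 0 < pim π (Q 1) := pim_pos hπ (hQne 1)
    have hsum : pim π (Q 0) + pim π (Q 1) ≤ 1 := by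
      have h1 : pim π (Q 0) + pim π (Q 1) = pim π (Q 0 ∪ Q 1) := by
        unfold pim; rw [Finset.sum_union hd]
      rw [h1, ← hπ1]
      exact Finset.sum_le_sum_of_subset_of_nonneg (Finset.subset_univ _)
        (fun i _ _ => (hπ i).le)
    have hnu : ∀ i : Fin 2, Q i ≠ Finset.univ := by
      intro i hiu
      have hdij : Disjoint (Q i) (Q (1 - i)) := by
        apply hdisj
        fin_cases i <;> decide
      obtain ⟨x, hx⟩ := hQne (1 - i)
      have hxQ : x ∈ Q i := hiu ▸ Finset.mem_univ x
      exact Finset.disjoint_left.mp hdij hxQ hx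
    have hmem : ∀ i : Fin 2,
        dpart K π (Q i) / (2 * pim π (Q i) * (1 - pim π (Q i))) ∈ R :=
      fun i => ⟨Q i, hQne i, hnu i, rfl⟩
    have hkey := key_min_le (dpart_nonneg hK0 hπ (Q 0)) (dpart_nonneg hK0 hπ (Q 1))
      hp0 hp1 hsum
    rw [Fin.sum_univ_two]
    refine le_trans (le_trans (le_min (csInf_le hRbdd (hmem 0)) (csInf_le hRbdd (hmem 1))) hkey) ?_
    exact le_rfl
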